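/- Let d ≥ 1, λ > 0, C_g > 0, t ≥ 1, and let g_0, …, g_{t-1} ∈ ℝ^d satisfy ‖g_i‖₂ ≤ C_g for all 0 ≤ i ≤ t-1. Define Σ_t = λI + Σ_{i=0}^{t-1} g_i g_iᵀ. Then Σ_{i=0}^{t-1} g_iᵀ Σ_t^{-1} g_i ≤ 2d · log(1 + t·C_g² / (d·λ)). -/

import Mathlib

open Matrix Finset

lemma vecMulVec_mulVec' {d : ℕ} (v w y : Fin d → ℝ) :
    vecMulVec v w *ᵥ y = (w ⬝ᵥ y) • v := by
  ext i
  simp [Matrix.mulVec, vecMulVec_apply, dotProduct, Finset.sum_mul, Finset.mul_sum,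
    mul_comm, mul_assoc, mul_left_comm]

lemma sum_mulVec' {d : ℕ} (s : Finset ℕ) (A : ℕ → Matrix (Fin d) (Fin d) ℝ)
    (y : Fin d → ℝ) : (∑ i ∈ s, A i) *ᵥ y = ∑ i ∈ s, A i *ᵥ y := by
  ext j
  simp only [Matrix.mulVec, dotProduct, Matrix.sum_apply, Finset.sum_mul,
    Finset.sum_apply]
  exact Finset.sum_comm

lemma sum_dotProduct' {d : ℕ} (s : Finset ℕ) (f : ℕ → Fin d → ℝ) (w : Fin d → ℝ) :
    (∑ i ∈ s, f i) ⬝ᵥ w = ∑ i ∈ s, f i ⬝ᵥ w := by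
  simp only [dotProduct, Finset.sum_apply, Finset.sum_mul]
  exact Finset.sum_comm

lemma trace_mul_vecMulVec' {d : ℕ} (A : Matrix (Fin d) (Fin d) ℝ) (v : Fin d → ℝ) :
    trace (A * vecMulVec v v) = v ⬝ᵥ (A *ᵥ v) := by
  simp only [Matrix.trace, Matrix.diag, Matrix.mul_apply, vecMulVec_apply, dotProduct,
    Matrix.mulVec, Finset.mul_sum]
  refine Finset.sum_congr rfl fun j _ => Finset.sum_congr rfl fun k _ => by ring

/-- Elliptical potential bound: if `‖g_i‖₂ ≤ C_g` for all `i < t`, then for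
`Σ_t = λI + ∑_{i<t} g_i g_iᵀ`,
`∑_{i<t} g_iᵀ Σ_t⁻¹ g_i ≤ 2 d log(1 + t C_g²/(d λ))`. -/
theorem sum_quadratic_inv_bound
    (d : ℕ) (hd : 1 ≤ d) (lam Cg : ℝ) (hlam : 0 < lam) (hCg : 0 < Cg)
    (t : ℕ) (ht : 1 ≤ t) (g : ℕ → Fin d → ℝ)
    (hg : ∀ i < t, Real.sqrt (g i ⬝ᵥ g i) ≤ Cg)
    (St : Matrix (Fin d) (Fin d) ℝ)
    (hSt : St = lam • (1 : Matrix (Fin d) (Fin d) ℝ) +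
      ∑ i ∈ Finset.range t, vecMulVec (g i) (g i)) :
    ∑ i ∈ Finset.range t, g i ⬝ᵥ (St⁻¹ *ᵥ g i) ≤
      2 * d * Real.log (1 + t * Cg ^ 2 / (d * lam)) := by
  -- self dot products are nonneg
  have hself : ∀ v : Fin d → ℝ, 0 ≤ v ⬝ᵥ v := fun v =>
    Finset.sum_nonneg fun i _ => mul_self_nonneg _
  -- quadratic form of St
  have hquad : ∀ y : Fin d → ℝ, (St *ᵥ y) ⬝ᵥ y =
      lam * (y ⬝ᵥ y) + ∑ i ∈ Finset.range t, (g i ⬝ᵥ y) ^ 2 := by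
    intro y
    rw [hSt, Matrix.add_mulVec, add_dotProduct, sum_mulVec', sum_dotProduct']
    congr 1
    · rw [Matrix.smul_mulVec, Matrix.one_mulVec, smul_dotProduct,
        smul_eq_mul]
    · refine Finset.sum_congr rfl fun i _ => ?_
      rw [vecMulVec_mulVec', smul_dotProduct, smul_eq_mul, sq]
  -- St has nonzero determinant
  have hdet : St.det ≠ 0 := by
    intro h
    obtain ⟨v, hv, hvz⟩ := (Matrix.exists_mulVec_eq_zero_iff).2 h
    have h1 := hquad v
    rw [hvz, zero_dotProduct] at h1
    have hsq : 0 ≤ ∑ i ∈ Finset.range t, (g i ⬝ᵥ v) ^ 2 :=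
      Finset.sum_nonneg fun i _ => sq_nonneg _
    have hvv : v ⬝ᵥ v = 0 := by nlinarith [hself v]
    exact hv ((dotProduct_self_eq_zero).1 hvv)
  have hunit : IsUnit St.det := isUnit_iff_ne_zero.2 hdet
  have hmul : St * St⁻¹ = 1 := Matrix.mul_nonsing_inv _ hunit
  have hmul' : St⁻¹ * St = 1 := Matrix.nonsing_inv_mul _ hunit
  -- key pointwise bounds on the quadratic form of St⁻¹
  have hQ : ∀ v : Fin d → ℝ, 0 ≤ v ⬝ᵥ (St⁻¹ *ᵥ v) ∧
      lam * (v ⬝ᵥ (St⁻¹ *ᵥ v)) ≤ v ⬝ᵥ v := by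
    intro v
    set y := St⁻¹ *ᵥ v with hy
    have hv : St *ᵥ y = v := by
      rw [hy, Matrix.mulVec_mulVec, hmul, Matrix.one_mulVec]
    have hc : v ⬝ᵥ y = lam * (y ⬝ᵥ y) + ∑ i ∈ Finset.range t, (g i ⬝ᵥ y) ^ 2 := by
      rw [← hv]; exact hquad y
    have hsq : 0 ≤ ∑ i ∈ Finset.range t, (g i ⬝ᵥ y) ^ 2 :=
      Finset.sum_nonneg fun i _ => sq_nonneg _
    have hn : 0 ≤ y ⬝ᵥ y := hself y
    have hcs : (v ⬝ᵥ y) ^ 2 ≤ (v ⬝ᵥ v) * (y ⬝ᵥ y) := by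
      have := Finset.sum_mul_sq_le_sq_mul_sq Finset.univ v y
      simpa [dotProduct, sq] using this
    constructor
    · rw [hc]; positivity
    · have hcnn : 0 ≤ v ⬝ᵥ y := by rw [hc]; positivity
      have h4 : lam * (y ⬝ᵥ y) ≤ v ⬝ᵥ y := by linarith
      rcases eq_or_lt_of_le hcnn with h | h
      · rw [← h, mul_zero]; exact hself v
      · nlinarith [hself v, mul_le_mul_of_nonneg_left hcs hlam.le,
          mul_le_mul_of_nonneg_left h4 (hself v)]
  -- bound each term by C_g^2 / lam
  have hgsq : ∀ i < t, g i ⬝ᵥ g i ≤ Cg ^ 2 := by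
    intro i hi
    have h1 := hg i hi
    have h2 : Real.sqrt (g i ⬝ᵥ g i) ^ 2 ≤ Cg ^ 2 := by
      apply pow_le_pow_left₀ (Real.sqrt_nonneg _) h1
    rwa [Real.sq_sqrt (hself _)] at h2
  have hboundA : ∑ i ∈ Finset.range t, g i ⬝ᵥ (St⁻¹ *ᵥ g i) ≤ t * Cg ^ 2 / lam := by
    have : ∀ i ∈ Finset.range t, g i ⬝ᵥ (St⁻¹ *ᵥ g i) ≤ Cg ^ 2 / lam := by
      intro i hi
      have h2 := (hQ (g i)).2
      have h3 := hgsq i (Finset.mem_range.1 hi)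
      rw [le_div_iff₀ hlam]; nlinarith
    calc ∑ i ∈ Finset.range t, g i ⬝ᵥ (St⁻¹ *ᵥ g i)
        ≤ ∑ _i ∈ Finset.range t, Cg ^ 2 / lam := Finset.sum_le_sum this
      _ = t * Cg ^ 2 / lam := by
          rw [Finset.sum_const, Finset.card_range, nsmul_eq_mul]; ring
  -- trace bound: sum ≤ d
  have htr : ∑ i ∈ Finset.range t, g i ⬝ᵥ (St⁻¹ *ᵥ g i) =
      (d : ℝ) - lam * trace St⁻¹ := by
    have h1 : trace (St⁻¹ * St) = (d : ℝ) := by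
      rw [hmul', Matrix.trace_one]; simp
    have h2 : St⁻¹ * St = lam • St⁻¹ +
        ∑ i ∈ Finset.range t, St⁻¹ * vecMulVec (g i) (g i) := by
      rw [hSt, Matrix.mul_add, Finset.mul_sum]
      congr 1
      rw [Matrix.mul_smul, Matrix.mul_one]
    rw [h2, Matrix.trace_add, Matrix.trace_smul, Matrix.trace_sum] at h1
    simp only [trace_mul_vecMulVec'] at h1
    rw [smul_eq_mul] at h1
    linarith
  have htrnn : 0 ≤ trace St⁻¹ := by
    rw [Matrix.trace]
    apply Finset.sum_nonneg
    intro j _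
    have := (hQ (Pi.single j 1)).1
    have heq : (Pi.single j 1 : Fin d → ℝ) ⬝ᵥ (St⁻¹ *ᵥ Pi.single j 1) = St⁻¹ j j := by
      simp [Matrix.mulVec_single, single_dotProduct, dotProduct,
        Pi.single_apply, Finset.mul_sum]
    rwa [heq] at this
  have hboundB : ∑ i ∈ Finset.range t, g i ⬝ᵥ (St⁻¹ *ᵥ g i) ≤ (d : ℝ) := by
    rw [htr]; nlinarith
  -- final scalar inequality
  set x : ℝ := t * Cg ^ 2 / (d * lam) with hxdef
  have hd' : (1 : ℝ) ≤ (d : ℝ) := by exact_mod_cast hd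
  have ht' : (1 : ℝ) ≤ (t : ℝ) := by exact_mod_cast ht
  have hx : 0 < x := by
    apply div_pos
    · positivity
    · positivity
  have hdx : (d : ℝ) * x = t * Cg ^ 2 / lam := by
    rw [hxdef]; field_simp
  have hlog : x / (1 + x) ≤ Real.log (1 + x) := by
    have h1 : Real.log ((1 + x)⁻¹) ≤ (1 + x)⁻¹ - 1 :=
      Real.log_le_sub_one_of_pos (by positivity)
    rw [Real.log_inv] at h1
    have h2 : 1 - (1 + x)⁻¹ ≤ Real.log (1 + x) := by linarith
    have h3 : x / (1 + x) = 1 - (1 + x)⁻¹ := by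
      field_simp
      ring
    linarith
  set S := ∑ i ∈ Finset.range t, g i ⬝ᵥ (St⁻¹ *ᵥ g i) with hS
  have hSdx : S ≤ (d : ℝ) * x := by rw [hdx]; exact hboundA
  have h1x : 0 < 1 + x := by linarith
  rcases le_or_gt x 1 with hx1 | hx1
  · -- S ≤ d x ≤ 2 d x/(1+x) ≤ 2 d log(1+x)
    have key : (d : ℝ) * x ≤ 2 * d * (x / (1 + x)) := by
      rw [show 2 * (d : ℝ) * (x / (1 + x)) = 2 * (d : ℝ) * x / (1 + x) from by ring,
        le_div_iff₀ h1x]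
      nlinarith [mul_nonneg (mul_nonneg (by positivity : (0:ℝ) ≤ (d:ℝ)) hx.le)
        (by linarith : (0:ℝ) ≤ 1 - x)]
    calc S ≤ (d : ℝ) * x := hSdx
      _ ≤ 2 * d * (x / (1 + x)) := key
      _ ≤ 2 * d * Real.log (1 + x) := by
          apply mul_le_mul_of_nonneg_left hlog (by positivity)
  · have key : (d : ℝ) ≤ 2 * d * (x / (1 + x)) := by
      rw [mul_div_assoc', le_div_iff₀ h1x]
      nlinarith
    calc S ≤ (d : ℝ) := hboundB
      _ ≤ 2 * d * (x / (1 + x)) := key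
      _ ≤ 2 * d * Real.log (1 + x) := by
          apply mul_le_mul_of_nonneg_left hlog (by positivity)
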